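/- For every object X of the idempotent completion Karoubi C, the triangle (X, X, 0; 1_X, 0, 0) belongs to the class Θ̃. -/

import Mathlib

open CategoryTheory CategoryTheory.Limits CategoryTheory.Pretriangulated
  CategoryTheory.Idempotents ZeroObject

variable (C : Type*) [Category C] [Preadditive C] [HasZeroObject C] [HasFiniteBiproducts C]
  [HasShift C ℤ] [∀ n : ℤ, (shiftFunctor C n).Additive] [Pretriangulated C]

/-- The shift on the idempotent completion `Karoubi C` induced by the shift on `C`:
`(A, e)⟦n⟧ = (A⟦n⟧, e⟦n⟧)`. -/
noncomputable instance karoubiHasShift : HasShift (Karoubi C) ℤ :=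
  HasShift.induced (toKaroubi C) ℤ
    (fun n => (functorExtension₂ C C).obj (shiftFunctor C n))
    (fun n => (functorExtension₂CompWhiskeringLeftToKaroubiIso C C).app (shiftFunctor C n))

/-- The functor `toKaroubi C` commutes with the shifts. -/
noncomputable instance toKaroubiCommShift : (toKaroubi C).CommShift ℤ :=
  Functor.CommShift.ofInduced (toKaroubi C) ℤ
    (fun n => (functorExtension₂ C C).obj (shiftFunctor C n))
    (fun n => (functorExtension₂CompWhiskeringLeftToKaroubiIso C C).app (shiftFunctor C n))

noncomputable instance karoubiShiftAdditive (n : ℤ) :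
    (shiftFunctor (Karoubi C) n).Additive := by
  change ((functorExtension₂ C C).obj (shiftFunctor C n)).Additive
  constructor
  intro X Y f g
  ext
  first
    | (simp; done)
    | (simp; rfl)
    | (simp; congr 1)
    | (simp; exact Subsingleton.elim _ _)

noncomputable instance : HasBinaryBiproducts (Karoubi C) :=
  hasBinaryBiproducts_of_finite_biproducts _

variable {C}

/-- The direct sum of two triangles: the triangle on the biproducts of the corresponding
objects, with the componentwise maps. -/
noncomputable def triangleSum {D : Type*} [Category D] [Preadditive D] [HasBinaryBiproducts D]
    [HasShift D ℤ] (T T' : Triangle D) : Triangle D :=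
  Triangle.mk (biprod.map T.mor₁ T'.mor₁) (biprod.map T.mor₂ T'.mor₂)
    (biprod.desc (T.mor₃ ≫ (biprod.inl : T.obj₁ ⟶ T.obj₁ ⊞ T'.obj₁)⟦(1:ℤ)⟧')
      (T'.mor₃ ≫ (biprod.inr : T'.obj₁ ⟶ T.obj₁ ⊞ T'.obj₁)⟦(1:ℤ)⟧'))

variable (C)

/-- The class `Θ̃` of triangles of `Karoubi C`: a triangle `T` belongs to `Θ̃` if there is a
triangle `T'` of `Karoubi C` such that `T ⊕ T'` is isomorphic to the image under
`(toKaroubi C).mapTriangle` of a distinguished triangle of `C`. -/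
noncomputable def thetaTilde : Set (Triangle (Karoubi C)) :=
  {T | ∃ (T' : Triangle (Karoubi C)) (S : Triangle C),
    (S ∈ distTriang C) ∧ Nonempty (triangleSum T T' ≅ (toKaroubi C).mapTriangle.obj S)}

/-- For every object `X` of `Karoubi C`, the triangle `(X, X, 0; 𝟙 X, 0, 0)` belongs to the
class `Θ̃`. -/
theorem stmt10 (X : Karoubi C) :
    Triangle.mk (𝟙 X) (0 : X ⟶ (0 : Karoubi C)) (0 : (0 : Karoubi C) ⟶ X⟦(1:ℤ)⟧) ∈
      thetaTilde C := by
  refine ⟨Triangle.mk (𝟙 X.complement) (0 : X.complement ⟶ (0 : Karoubi C))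
      (0 : (0 : Karoubi C) ⟶ X.complement⟦(1:ℤ)⟧), Triangle.mk (𝟙 X.X) (0 : X.X ⟶ 0) 0,
    contractible_distinguished X.X, ⟨?_⟩⟩
  have hz₁ : IsZero ((0 : Karoubi C) ⊞ (0 : Karoubi C)) := by
    rw [IsZero.iff_id_eq_zero]
    apply biprod.hom_ext <;> apply (isZero_zero (Karoubi C)).eq_of_tgt
  have hz₂ : IsZero ((toKaroubi C).obj 0) :=
    (toKaroubi C).map_isZero (isZero_zero C)
  refine Triangle.isoMk _ _ (Karoubi.decomposition X) (Karoubi.decomposition X)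
    (hz₁.iso hz₂) ?_ ?_ ?_
  · have h : biprod.map (𝟙 X) (𝟙 X.complement) = 𝟙 (X ⊞ X.complement) := by
      apply biprod.hom_ext <;> simp
    show biprod.map (𝟙 X) (𝟙 X.complement) ≫ X.decomposition.hom =
      X.decomposition.hom ≫ (toKaroubi C).map (𝟙 X.X)
    rw [h]
    simp
  · apply hz₂.eq_of_tgt
  · apply hz₁.eq_of_src
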